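/- Let k be a finite field with q elements, n ≥ 2 an integer, and f₂, f₃ ∈ k[x₁,…,x_n] homogeneous of degrees 2 and 3 respectively, with (f₂,f₃) ≠ (0,0). Let X := {[x₁:⋯:x_n:t] ∈ ℙ^n(k) : f₂(x)·t + f₃(x) = 0} (the k-points of a cubic hypersurface in ℙ^n singular at [0:⋯:0:1]; every cubic hypersurface in ℙ^n over k singular at [0:⋯:0:1] has this form). Then #X = #{[x] ∈ ℙ^{n−1}(k) : f₂(x) ≠ 0} + 1 + q·#{[x] ∈ ℙ^{n−1}(k) : f₂(x) = 0 and f₃(x) = 0}. -/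

import Mathlib

open MvPolynomial

lemma eval_smul_hom {m d : ℕ} {k : Type} [CommRing k] (f : MvPolynomial (Fin m) k)
    (hf : f.IsHomogeneous d) (c : k) (x : Fin m → k) :
    eval (c • x) f = c ^ d * eval x f := by
  rw [eval_eq, eval_eq, Finset.mul_sum]
  apply Finset.sum_congr rfl
  intro s hs
  have hdeg : ∑ i ∈ s.support, s i = d := by
    by_contra h
    exact (mem_support_iff.mp hs) (hf.coeff_eq_zero (by simpa [Finsupp.degree_apply] using h))
  have : ∏ i ∈ s.support, (c • x) i ^ s i = c ^ d * ∏ i ∈ s.support, x i ^ s i := by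
    simp only [Pi.smul_apply, smul_eq_mul, mul_pow, Finset.prod_mul_distrib,
      Finset.prod_pow_eq_pow_sum, hdeg]
  rw [this]; ring

section main
variable (k : Type) [Field k] [Fintype k] (n : ℕ)
  (f₂ f₃ : MvPolynomial (Fin n) k)

lemma count_main (h2 : f₂.IsHomogeneous 2) (h3 : f₃.IsHomogeneous 3) :
    Nat.card {y : Fin (n + 1) → k // y ≠ 0 ∧
        eval (fun i : Fin n => y (Fin.castSucc i)) f₂ * y (Fin.last n) +
          eval (fun i : Fin n => y (Fin.castSucc i)) f₃ = 0} =
      (Fintype.card k - 1) +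
        (Nat.card {x : Fin n → k // x ≠ 0 ∧ eval x f₂ ≠ 0} +
          Fintype.card k *
            Nat.card {x : Fin n → k // x ≠ 0 ∧ (eval x f₂ = 0 ∧ eval x f₃ = 0)}) := by
  classical
  have hz2 : eval (0 : Fin n → k) f₂ = 0 := by
    have := eval_smul_hom f₂ h2 (0 : k) 0
    simp only [smul_zero] at this
    rw [this]; ring
  have hz3 : eval (0 : Fin n → k) f₃ = 0 := by
    have := eval_smul_hom f₃ h3 (0 : k) 0
    simp only [smul_zero] at this
    rw [this]; ring
  have hz2' : constantCoeff f₂ = 0 := by rwa [← eval_zero]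
  have hz3' : constantCoeff f₃ = 0 := by rwa [← eval_zero]
  set q := Fintype.card k with hq
  -- the splitting equivalence
  let e1 : (Fin (n + 1) → k) ≃ (Fin n → k) × k :=
    { toFun := fun y => (fun i => y i.castSucc, y (Fin.last n))
      invFun := fun p => Fin.snoc p.1 p.2
      left_inv := fun y => Fin.snoc_init_self y
      right_inv := fun p => by
        refine Prod.ext ?_ ?_
        · funext i; simp [Fin.snoc_castSucc]
        · simp }
  have hQiff : ∀ y : Fin (n + 1) → k,
      (y ≠ 0 ∧ eval (fun i : Fin n => y (Fin.castSucc i)) f₂ * y (Fin.last n) +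
          eval (fun i : Fin n => y (Fin.castSucc i)) f₃ = 0) ↔
      (¬((e1 y).1 = 0 ∧ (e1 y).2 = 0) ∧
        eval (e1 y).1 f₂ * (e1 y).2 + eval (e1 y).1 f₃ = 0) := by
    intro y
    have hzero : y = 0 ↔ ((fun i : Fin n => y (Fin.castSucc i)) = 0 ∧ y (Fin.last n) = 0) := by
      constructor
      · rintro rfl; exact ⟨rfl, rfl⟩
      · rintro ⟨ha, hb⟩
        funext j
        refine Fin.lastCases ?_ ?_ j
        · exact hb
        · intro i; exact congrFun ha i
    constructor
    · rintro ⟨h1, hh⟩; exact ⟨fun h => h1 (hzero.mpr h), hh⟩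
    · rintro ⟨h1, hh⟩; exact ⟨fun h => h1 (hzero.mp h), hh⟩
  rw [Nat.card_congr ((Equiv.subtypeEquiv e1 hQiff).trans
    (Equiv.subtypeProdEquivSigmaSubtype
      (fun (x : Fin n → k) (t : k) => ¬(x = 0 ∧ t = 0) ∧ eval x f₂ * t + eval x f₃ = 0)))]
  rw [Nat.card_eq_fintype_card, Fintype.card_sigma]
  -- fiber counts
  have hc : ∀ x : Fin n → k,
      Fintype.card {t : k // ¬(x = 0 ∧ t = 0) ∧ eval x f₂ * t + eval x f₃ = 0} =
        (if x = 0 then q - 1 else 0) +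
          ((if x ≠ 0 ∧ eval x f₂ ≠ 0 then 1 else 0) +
            q * (if x ≠ 0 ∧ (eval x f₂ = 0 ∧ eval x f₃ = 0) then 1 else 0)) := by
    intro x
    by_cases hx : x = 0
    · subst hx
      have hcard : Fintype.card {t : k // ¬((0 : Fin n → k) = 0 ∧ t = 0) ∧
          eval (0 : Fin n → k) f₂ * t + eval (0 : Fin n → k) f₃ = 0} = q - 1 := by
        rw [Fintype.card_congr (Equiv.subtypeEquivRight (q := fun t : k => ¬ t = 0)
          (fun t => by simp [hz2, hz3, hz2', hz3']))]
        rw [Fintype.card_subtype_compl, Fintype.card_subtype_eq (0 : k)]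
      rw [hcard, if_pos rfl, if_neg (fun h => h.1 rfl), if_neg (fun h => h.1 rfl)]
      omega
    · by_cases ha : eval x f₂ ≠ 0
      · have hcard : Fintype.card {t : k // ¬(x = 0 ∧ t = 0) ∧
            eval x f₂ * t + eval x f₃ = 0} = 1 := by
          rw [Fintype.card_congr (Equiv.subtypeEquivRight
            (q := fun t : k => t = -eval x f₃ / eval x f₂) (fun t => by
              constructor
              · rintro ⟨-, h⟩
                field_simp
                linear_combination h
              · rintro rfl
                refine ⟨fun h => hx h.1, by field_simp; ring⟩))]
          rw [Fintype.card_subtype_eq]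
        rw [hcard, if_neg hx, if_pos ⟨hx, ha⟩, if_neg (fun h => ha h.2.1)]
        omega
      · push_neg at ha
        by_cases hb : eval x f₃ = 0
        · have hcard : Fintype.card {t : k // ¬(x = 0 ∧ t = 0) ∧
              eval x f₂ * t + eval x f₃ = 0} = q := by
            rw [Fintype.card_congr ((Equiv.subtypeEquivRight
              (q := fun _ : k => True) (fun t => by simp [ha, hb, hx])).trans
              (Equiv.subtypeUnivEquiv (fun t => trivial)))]
          rw [hcard, if_neg hx, if_neg (fun h => h.2 ha), if_pos ⟨hx, ha, hb⟩]
          ring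
        · have : IsEmpty {t : k // ¬(x = 0 ∧ t = 0) ∧ eval x f₂ * t + eval x f₃ = 0} := by
            constructor
            rintro ⟨t, -, h⟩
            exact hb (by simpa [ha] using h)
          rw [Fintype.card_eq_zero, if_neg hx, if_neg (fun h => h.2 ha),
            if_neg (fun h => hb h.2.2)]
          omega
  simp_rw [hc]
  rw [Finset.sum_add_distrib, Finset.sum_add_distrib, ← Finset.mul_sum]
  congr 1
  · rw [Finset.sum_ite_eq' Finset.univ (0 : Fin n → k) (fun _ => q - 1)]
    simp
  congr 1
  · rw [Nat.card_eq_fintype_card, Fintype.card_subtype, Finset.card_filter]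
  · congr 1
    rw [Nat.card_eq_fintype_card, Fintype.card_subtype, Finset.card_filter]


noncomputable def myAct {m : ℕ} (k : Type) [Field k] (P : (Fin m → k) → Prop)
    (hP : ∀ c : k, c ≠ 0 → ∀ x, P x → P (c • x)) :
    MulAction kˣ {x : Fin m → k // x ≠ 0 ∧ P x} where
  smul c x := ⟨(c : k) • x.1, by
    refine ⟨fun h => x.2.1 ?_, hP c c.ne_zero x.1 x.2.2⟩
    funext i
    have := congrFun h i
    simpa [Units.ne_zero c] using this⟩
  one_smul x := by apply Subtype.ext; show ((1 : kˣ) : k) • x.1 = x.1; simp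
  mul_smul c d x := by
    apply Subtype.ext
    show ((c * d : kˣ) : k) • x.1 = (c : k) • ((d : k) • x.1)
    simp [mul_smul]

open MulAction in
lemma dvd_card_aux {m : ℕ} (k : Type) [Field k] [Fintype k] (P : (Fin m → k) → Prop)
    (hP : ∀ c : k, c ≠ 0 → ∀ x, P x → P (c • x)) :
    (Nat.card k - 1) ∣ Nat.card {x : Fin m → k // x ≠ 0 ∧ P x} := by
  classical
  letI := myAct k P hP
  have hstab : ∀ s : {x : Fin m → k // x ≠ 0 ∧ P x}, stabilizer kˣ s = ⊥ := by
    intro s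
    ext c
    simp only [mem_stabilizer_iff, Subgroup.mem_bot]
    constructor
    · intro h
      obtain ⟨i, hi⟩ : ∃ i, s.1 i ≠ 0 := by
        by_contra hc; push_neg at hc; exact s.2.1 (funext hc)
      have hci : (c : k) * s.1 i = s.1 i := congrFun (congrArg Subtype.val h) i
      exact Units.ext (mul_right_cancel₀ hi (by rw [Units.val_one, one_mul]; exact hci))
    · rintro rfl; exact one_smul _ _
  have e := selfEquivSigmaOrbitsQuotientStabilizer kˣ {x : Fin m → k // x ≠ 0 ∧ P x}
  have e3 : ∀ ω : Quotient (orbitRel kˣ {x : Fin m → k // x ≠ 0 ∧ P x}),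
      (kˣ ⧸ stabilizer kˣ (Quotient.out ω)) ≃ kˣ := fun ω =>
    (Subgroup.quotientEquivOfEq (hstab ω.out)).trans (QuotientGroup.quotientBot (G := kˣ)).toEquiv
  have e2 := e.trans ((Equiv.sigmaCongrRight e3).trans (Equiv.sigmaEquivProd _ _))
  rw [Nat.card_congr e2, Nat.card_prod]
  have : Nat.card kˣ = Nat.card k - 1 := by
    simp [Nat.card_eq_fintype_card, Fintype.card_units]
  rw [this]
  exact Dvd.intro _ (mul_comm _ _)

/-- Number of points of the projective subset of `ℙ^{m-1}(k)` cut out by the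
(scale-invariant) condition `P`. -/
noncomputable def projCount {m : ℕ} (k : Type) [Field k]
    (P : (Fin m → k) → Prop) : ℕ :=
  Nat.card {x : Fin m → k // x ≠ 0 ∧ P x} / (Nat.card k - 1)

/-- Proposition 5.8 (point count of a cubic hypersurface with a rational singular
point): writing points of `ℙ^n` as `[x₁ : ⋯ : x_n : t]`, for the cubic
`f₂(x)·t + f₃(x) = 0` one has
`#X = #{[x] : f₂(x) ≠ 0} + 1 + q·#{[x] : f₂(x) = f₃(x) = 0}`. -/
theorem stmt15 (k : Type) [Field k] [Fintype k] (n : ℕ) (hn : 2 ≤ n)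
    (f₂ f₃ : MvPolynomial (Fin n) k)
    (h2 : f₂.IsHomogeneous 2) (h3 : f₃.IsHomogeneous 3)
    (hne : ¬ (f₂ = 0 ∧ f₃ = 0)) :
    projCount k (fun y : Fin (n + 1) → k =>
        eval (fun i : Fin n => y (Fin.castSucc i)) f₂ * y (Fin.last n) +
          eval (fun i : Fin n => y (Fin.castSucc i)) f₃ = 0) =
      projCount k (fun x : Fin n → k => eval x f₂ ≠ 0) + 1 +
        Nat.card k *
          projCount k (fun x : Fin n → k => eval x f₂ = 0 ∧ eval x f₃ = 0) := by
  classical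
  have hq : Nat.card k = Fintype.card k := Nat.card_eq_fintype_card
  have hq2 : 2 ≤ Fintype.card k := Fintype.one_lt_card
  have hpos : 0 < Fintype.card k - 1 := by omega
  -- scale invariance
  have hPA : ∀ c : k, c ≠ 0 → ∀ x : Fin n → k,
      (fun x : Fin n → k => eval x f₂ ≠ 0) x →
      (fun x : Fin n → k => eval x f₂ ≠ 0) (c • x) := by
    intro c hc x hx
    simp only [eval_smul_hom f₂ h2]
    exact mul_ne_zero (pow_ne_zero _ hc) hx
  have hPB : ∀ c : k, c ≠ 0 → ∀ x : Fin n → k,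
      (fun x : Fin n → k => eval x f₂ = 0 ∧ eval x f₃ = 0) x →
      (fun x : Fin n → k => eval x f₂ = 0 ∧ eval x f₃ = 0) (c • x) := by
    intro c hc x hx
    refine ⟨?_, ?_⟩ <;>
      simp [eval_smul_hom f₂ h2, eval_smul_hom f₃ h3, hx.1, hx.2]
  obtain ⟨a, ha⟩ := dvd_card_aux k (fun x : Fin n → k => eval x f₂ ≠ 0) hPA
  obtain ⟨b, hb⟩ := dvd_card_aux k (fun x : Fin n → k => eval x f₂ = 0 ∧ eval x f₃ = 0) hPB
  rw [hq] at ha hb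
  unfold projCount
  rw [count_main k n f₂ f₃ h2 h3, hq, ha, hb]
  rw [Nat.mul_div_cancel_left a hpos, Nat.mul_div_cancel_left b hpos]
  have : Fintype.card k - 1 + ((Fintype.card k - 1) * a +
      Fintype.card k * ((Fintype.card k - 1) * b)) =
      (Fintype.card k - 1) * (1 + a + Fintype.card k * b) := by ring
  rw [this, Nat.mul_div_cancel_left _ hpos]
  ring
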